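/- Let n ∈ ℕ, 0 < r_j < ∞, 1 ≤ p_j < ∞, 1 ≤ θ_j ≤ ∞ for j = 1,…,n; let 0 < δ ≤ (1/2)min_j{β_j r_j} with β_j > 0 defined as in the context; let φ_j be positive, strictly increasing, continuously differentiable functions on (0,∞) such that φ_j(t)t^{−r_j+δ} increases and φ_j(t)t^{−r_j−δ} decreases; and let σ(t) = inf{max_{1≤j≤n} t^{−1/p_j} φ_j(δ_j) : δ_j > 0, ∏_j δ_j = t}. Then for each fixed t > 0 the infimum defining σ(t) is attained, and for each j there is a unique δ_j(t) > 0 with σ(t) = t^{−1/p_j} φ_j(δ_j(t)); moreover the resulting functions σ and δ_j are continuously differentiable on (0,∞) and satisfy, for all t > 0, (r/n − 1/p − δ)/t ≤ σ'(t)/σ(t) ≤ (r/n − 1/p + δ)/t and (β_j r_j − δ)/((r_j + δ) t) ≤ δ_j'(t)/δ_j(t) ≤ (β_j r_j + δ)/((r_j − δ) t). -/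

import Mathlib

open MeasureTheory Set
open scoped ENNReal NNReal BigOperators

noncomputable section

/-- The measure `du/u` on `(0,∞)`. -/
def muLog : Measure ℝ :=
  (volume.restrict (Set.Ioi (0:ℝ))).withDensity fun u => ENNReal.ofReal u⁻¹

/-- The `𝓛^θ` norm of an `ℝ≥0∞`-valued function on `(0,∞)` (with respect to `du/u`),
for `θ ∈ [1,∞]`; for `θ = ∞` it is the essential supremum. -/
def calLE (θ : ℝ≥0∞) (g : ℝ → ℝ≥0∞) : ℝ≥0∞ :=
  if θ = ∞ then essSup g muLog
  else (∫⁻ t, g t ^ θ.toReal ∂muLog) ^ (1 / θ.toReal)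

/-- The `𝓛^θ` norm of a real-valued function on `(0,∞)`. -/
def calL (θ : ℝ≥0∞) (g : ℝ → ℝ) : ℝ≥0∞ :=
  calLE θ fun t => ENNReal.ofReal |g t|

/-- The distribution function `λ_f(y) = |{x : |f x| > y}|`. -/
def distFn {n : ℕ} (f : (Fin n → ℝ) → ℝ) (y : ℝ) : ℝ≥0∞ :=
  volume {x | y < |f x|}

/-- `f ∈ S₀(ℝⁿ)`: measurable with finite distribution function for all `y > 0`. -/
def MemS0 {n : ℕ} (f : (Fin n → ℝ) → ℝ) : Prop :=
  Measurable f ∧ ∀ y : ℝ, 0 < y → distFn f y < ∞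

/-- The non-increasing rearrangement `f*`. -/
def rearr {n : ℕ} (f : (Fin n → ℝ) → ℝ) (t : ℝ) : ℝ :=
  sInf {y : ℝ | 0 ≤ y ∧ distFn f y ≤ ENNReal.ofReal t}

/-- The real-valued `L^p(ℝⁿ)` norm. -/
def lpR {n : ℕ} (p : ℝ) (f : (Fin n → ℝ) → ℝ) : ℝ :=
  (eLpNorm f (ENNReal.ofReal p) volume).toReal

/-- The difference of degree `k` in direction `j` with step `h`:
`Δ_j^k(h) f (x) = ∑ (-1)^{k-i} C(k,i) f(x + i h e_j)`. -/
def diffOp {n : ℕ} (j : Fin n) (k : ℕ) (h : ℝ) (f : (Fin n → ℝ) → ℝ) :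
    (Fin n → ℝ) → ℝ :=
  fun x => ∑ i ∈ Finset.range (k + 1),
    (-1 : ℝ) ^ (k - i) * (k.choose i : ℝ) * f (x + ((i : ℝ) * h) • (Pi.single j 1 : Fin n → ℝ))

/-- The modulus of continuity `ω_j^k(f;δ)_p = sup_{0<h≤δ} ‖Δ_j^k(h) f‖_p`. -/
def modCont {n : ℕ} (j : Fin n) (k : ℕ) (p : ℝ) (f : (Fin n → ℝ) → ℝ) (δ : ℝ) : ℝ :=
  sSup ((fun h => lpR p (diffOp j k h f)) '' Set.Ioc 0 δ)

/-- The directional Besov seminorm `‖f‖_{b^r_{p,θ;j}}` with difference order `k`. -/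
def besov {n : ℕ} (j : Fin n) (k : ℕ) (r p : ℝ) (θ : ℝ≥0∞)
    (f : (Fin n → ℝ) → ℝ) : ℝ≥0∞ :=
  calL θ fun h => h ^ (-r) * lpR p (diffOp j k h f)

/-- The Lorentz quasinorm `‖f‖_{q,s} = ‖t^{1/q} f*(t)‖_{𝓛^s}`. -/
def lorentz {n : ℕ} (q : ℝ) (s : ℝ≥0∞) (f : (Fin n → ℝ) → ℝ) : ℝ≥0∞ :=
  calL s fun t => t ^ (1 / q) * rearr f t

/-- The norm in the sum space `L¹ + L^{p₀}`. -/
def sumNormE {n : ℕ} (p₀ : ℝ) (f : (Fin n → ℝ) → ℝ) : ℝ≥0∞ :=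
  ⨅ (g : (Fin n → ℝ) → ℝ) (h : (Fin n → ℝ) → ℝ) (_ : f = g + h),
    eLpNorm g 1 volume + eLpNorm h (ENNReal.ofReal p₀) volume

/-- The function `σ(t) = inf { max_j t^{-1/p_j} φ_j(δ_j) : δ_j > 0, ∏ δ_j = t }`. -/
def sigmaFn {n : ℕ} (pp : Fin n → ℝ) (φ : Fin n → ℝ → ℝ) (t : ℝ) : ℝ :=
  sInf {a : ℝ | ∃ d : Fin n → ℝ, (∀ j, 0 < d j) ∧ (∏ j, d j) = t ∧
    a = ⨆ j, t ^ (-(pp j)⁻¹) * φ j (d j)}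

namespace Stmt17Aux

/-- Two-sided slope bound for a function on `ℝ`. -/
def SlopeBnd (L : ℝ → ℝ) (c C : ℝ) : Prop :=
  ∀ ⦃x y : ℝ⦄, x ≤ y → c * (y - x) ≤ L y - L x ∧ L y - L x ≤ C * (y - x)

variable {L : ℝ → ℝ} {c C : ℝ}

lemma SlopeBnd.strictMono (h : SlopeBnd L c C) (hc : 0 < c) : StrictMono L := by
  intro x y hxy; have h1 := (h hxy.le).1; nlinarith

lemma SlopeBnd.surjective (h : SlopeBnd L c C) (hc : 0 < c) (hcont : Continuous L) :
    Function.Surjective L := by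
  intro z
  rcases le_or_gt (L 0) z with hz | hz
  · set b := (z - L 0) / c with hb
    have hb0 : 0 ≤ b := div_nonneg (by linarith) hc.le
    have hLb : z ≤ L b := by
      have h1 := (h hb0).1
      have h2 : c * b ≤ L b - L 0 := by simpa using h1
      have hcb : c * b = z - L 0 := by rw [hb]; field_simp
      linarith
    obtain ⟨x, _, hx⟩ := intermediate_value_Icc hb0 hcont.continuousOn ⟨hz, hLb⟩
    exact ⟨x, hx⟩
  · set b := (z - L 0) / c with hb
    have hb0 : b ≤ 0 := div_nonpos_of_nonpos_of_nonneg (by linarith) hc.le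
    have hLb : L b ≤ z := by
      have h1 := (h hb0).1
      have h2 : c * (0 - b) ≤ L 0 - L b := by simpa using h1
      have hcb : c * b = z - L 0 := by rw [hb]; field_simp
      nlinarith
    obtain ⟨x, _, hx⟩ := intermediate_value_Icc hb0 hcont.continuousOn ⟨hLb, hz.le⟩
    exact ⟨x, hx⟩

lemma SlopeBnd.right_inv (h : SlopeBnd L c C) (hc : 0 < c) (hcont : Continuous L) :
    ∀ y, L (Function.invFun L y) = y :=
  fun y => Function.rightInverse_invFun (h.surjective hc hcont) y

lemma SlopeBnd.left_inv (h : SlopeBnd L c C) (hc : 0 < c) :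
    ∀ x, Function.invFun L (L x) = x :=
  fun x => Function.leftInverse_invFun (h.strictMono hc).injective x

lemma SlopeBnd.inv_slope (h : SlopeBnd L c C) (hc : 0 < c) (hC : 0 < C)
    (hcont : Continuous L) :
    SlopeBnd (Function.invFun L) C⁻¹ c⁻¹ := by
  intro x y hxy
  set a := Function.invFun L x with ha0
  set b := Function.invFun L y with hb0
  have hLa : L a = x := h.right_inv hc hcont x
  have hLb : L b = y := h.right_inv hc hcont y
  have hab : a ≤ b := by
    by_contra hab
    push_neg at hab
    have := (h.strictMono hc) hab
    rw [hLa, hLb] at this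
    exact absurd hxy (not_le.mpr this)
  have h2 := h hab
  rw [hLa, hLb] at h2
  constructor
  · rw [inv_mul_le_iff₀ hC]; nlinarith [h2.2]
  · rw [le_inv_mul_iff₀ hc]; nlinarith [h2.1]

lemma SlopeBnd.abs_bound (h : SlopeBnd L c C) (hc : 0 < c) :
    ∀ x y : ℝ, c * |y - x| ≤ |L y - L x| ∧ |L y - L x| ≤ C * |y - x| := by
  intro x y
  rcases le_total x y with hxy | hxy
  · have h2 := h hxy
    have h3 : 0 ≤ y - x := by linarith
    have h4 : 0 ≤ L y - L x := by nlinarith [h2.1]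
    rw [abs_of_nonneg h3, abs_of_nonneg h4]
    exact h2
  · have h2 := h hxy
    have h3 : 0 ≤ x - y := by linarith
    have h4 : 0 ≤ L x - L y := by nlinarith [h2.1]
    rw [show y - x = -(x-y) by ring, show L y - L x = -(L x - L y) by ring,
      abs_neg, abs_neg, abs_of_nonneg h3, abs_of_nonneg h4]
    exact h2

lemma SlopeBnd.continuous (h : SlopeBnd L c C) (hc : 0 < c) (hC : 0 < C) :
    Continuous L := by
  rw [Metric.continuous_iff]
  intro x ε hε
  refine ⟨ε / C, by positivity, fun y hy => ?_⟩
  have h2 := (h.abs_bound hc y x).2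
  rw [Real.dist_eq] at *
  rw [abs_sub_comm]
  calc |L x - L y| ≤ C * |x - y| := h2
  _ < C * (ε / C) := by
      apply mul_lt_mul_of_pos_left _ hC
      rw [abs_sub_comm]; exact hy
  _ = ε := by field_simp

lemma SlopeBnd.deriv_bounds (h : SlopeBnd L c C) (hL : ContDiff ℝ 1 L) (x : ℝ) :
    c ≤ deriv L x ∧ deriv L x ≤ C := by
  have hd : HasDerivAt L (deriv L x) x := ((hL.differentiable one_ne_zero) x).hasDerivAt
  rw [hasDerivAt_iff_tendsto_slope] at hd
  have hev1 : ∀ᶠ y in nhdsWithin x {x}ᶜ, c ≤ slope L x y ∧ slope L x y ≤ C := by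
    apply eventually_nhdsWithin_of_forall
    intro y hy
    have hyx : y ≠ x := hy
    rw [slope_def_field]
    rcases lt_or_gt_of_ne hyx with h1 | h1
    · have h2 := h h1.le
      have h3 : x - y > 0 := by linarith
      have heq : (L y - L x) / (y - x) = (L x - L y) / (x - y) := by
        rw [← neg_div_neg_eq]; ring_nf
      rw [heq]
      constructor
      · rw [le_div_iff₀ h3]; linarith [h2.1]
      · rw [div_le_iff₀ h3]; linarith [h2.2]
    · have h2 := h h1.le
      have h3 : y - x > 0 := by linarith
      constructor
      · rw [le_div_iff₀ h3]; linarith [h2.1]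
      · rw [div_le_iff₀ h3]; linarith [h2.2]
  constructor
  · exact ge_of_tendsto hd (hev1.mono fun y hy => hy.1)
  · exact le_of_tendsto hd (hev1.mono fun y hy => hy.2)

lemma SlopeBnd.hasDerivAt_inv (h : SlopeBnd L c C) (hc : 0 < c) (hC : 0 < C)
    (hL : ContDiff ℝ 1 L) (y : ℝ) :
    HasDerivAt (Function.invFun L) ((deriv L (Function.invFun L y))⁻¹) y := by
  have hcont := h.continuous hc hC
  have hMc : Continuous (Function.invFun L) :=
    (h.inv_slope hc hC hcont).continuous (by positivity) (by positivity)
  exact HasDerivAt.of_local_left_inverse hMc.continuousAt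
    (((hL.differentiable one_ne_zero) _).hasDerivAt)
    (ne_of_gt (lt_of_lt_of_le hc (h.deriv_bounds hL _).1))
    (Filter.Eventually.of_forall (h.right_inv hc hcont))

/-- slope bounds for `log ∘ φ ∘ exp` from the two monotonicity hypotheses. -/
lemma slopeBnd_logphi {φ : ℝ → ℝ} {ρ δ : ℝ}
    (hpos : ∀ t, 0 < t → 0 < φ t)
    (hup : MonotoneOn (fun t => φ t * t ^ (-ρ + δ)) (Set.Ioi 0))
    (hdown : AntitoneOn (fun t => φ t * t ^ (-ρ - δ)) (Set.Ioi 0)) :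
    SlopeBnd (fun y => Real.log (φ (Real.exp y))) (ρ - δ) (ρ + δ) := by
  intro x y hxy
  have hex : (0:ℝ) < Real.exp x := Real.exp_pos x
  have hey : (0:ℝ) < Real.exp y := Real.exp_pos y
  have hpx : 0 < φ (Real.exp x) := hpos _ hex
  have hpy : 0 < φ (Real.exp y) := hpos _ hey
  have hexy : Real.exp x ≤ Real.exp y := Real.exp_le_exp.mpr hxy
  have hrw : ∀ (z a : ℝ), (Real.exp z) ^ a = Real.exp (z * a) := by
    intro z a
    rw [Real.rpow_def_of_pos (Real.exp_pos z), Real.log_exp]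
  constructor
  · have h1 := hup (Set.mem_Ioi.mpr hex) (Set.mem_Ioi.mpr hey) hexy
    simp only [hrw] at h1
    have h2 := Real.log_le_log (by positivity) h1
    rw [Real.log_mul hpx.ne' (Real.exp_ne_zero _), Real.log_mul hpy.ne' (Real.exp_ne_zero _),
      Real.log_exp, Real.log_exp] at h2
    nlinarith
  · have h1 := hdown (Set.mem_Ioi.mpr hex) (Set.mem_Ioi.mpr hey) hexy
    simp only [hrw] at h1
    have h2 := Real.log_le_log (by positivity) h1
    rw [Real.log_mul hpx.ne' (Real.exp_ne_zero _), Real.log_mul hpy.ne' (Real.exp_ne_zero _),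
      Real.log_exp, Real.log_exp] at h2
    nlinarith

lemma contDiff_logphi {φ : ℝ → ℝ}
    (hpos : ∀ t, 0 < t → 0 < φ t) (hC1 : ContDiffOn ℝ 1 φ (Set.Ioi 0)) :
    ContDiff ℝ 1 (fun y => Real.log (φ (Real.exp y))) := by
  rw [contDiff_iff_contDiffAt]
  intro y
  have h1 : ContDiffAt ℝ 1 φ (Real.exp y) :=
    hC1.contDiffAt (isOpen_Ioi.mem_nhds (Set.mem_Ioi.mpr (Real.exp_pos y)))
  have h2 : ContDiffAt ℝ 1 Real.exp y := Real.contDiff_exp.contDiffAt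
  have h3 : ContDiffAt ℝ 1 Real.log (φ (Real.exp y)) :=
    Real.contDiffAt_log.mpr (hpos _ (Real.exp_pos y)).ne'
  exact h3.comp y (h1.comp y h2)

end Stmt17Aux
set_option maxHeartbeats 2000000 in
open Stmt17Aux in
/-- attainment and uniqueness of the equilibrating parameters, and the
logarithmic-derivative bounds for `σ` and the `δ_j`. -/
theorem stmt17 (n : ℕ) (hn : 0 < n) (rr pp : Fin n → ℝ) (θθ : Fin n → ℝ≥0∞)
    (hrr : ∀ j, 0 < rr j) (hpp : ∀ j, 1 ≤ pp j) (hθθ : ∀ j, 1 ≤ θθ j)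
    (r p : ℝ) (θ : ℝ≥0∞) (β : Fin n → ℝ)
    (hrdef : r = (n : ℝ) / ∑ j, (rr j)⁻¹)
    (hpdef : p = ((n : ℝ) / r) / ∑ j, (pp j * rr j)⁻¹)
    (hθdef : θ = (ENNReal.ofReal ((r / n) * ∑ j, ((θθ j)⁻¹).toReal / rr j))⁻¹)
    (hβdef : ∀ j, β j = (rr j)⁻¹ * (r / n + (pp j)⁻¹ - p⁻¹))
    (hβ : ∀ j, 0 < β j)
    (δ : ℝ) (hδ : 0 < δ) (hδ' : δ ≤ (1 / 2) * ⨅ j, β j * rr j)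
    (φ : Fin n → ℝ → ℝ)
    (hφpos : ∀ j t, 0 < t → 0 < φ j t)
    (hφmono : ∀ j, StrictMonoOn (φ j) (Set.Ioi 0))
    (hφC1 : ∀ j, ContDiffOn ℝ 1 (φ j) (Set.Ioi 0))
    (hφup : ∀ j, MonotoneOn (fun t => φ j t * t ^ (-(rr j) + δ)) (Set.Ioi 0))
    (hφdown : ∀ j, AntitoneOn (fun t => φ j t * t ^ (-(rr j) - δ)) (Set.Ioi 0)) :
    (∀ t, 0 < t → ∃ d : Fin n → ℝ, (∀ j, 0 < d j) ∧ (∏ j, d j) = t ∧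
      sigmaFn pp φ t = ⨆ j, t ^ (-(pp j)⁻¹) * φ j (d j)) ∧
    (∀ t, 0 < t → ∀ j, ∃! dj : ℝ, 0 < dj ∧ sigmaFn pp φ t = t ^ (-(pp j)⁻¹) * φ j dj) ∧
    ∃ δfun : Fin n → ℝ → ℝ,
      (∀ j t, 0 < t → 0 < δfun j t) ∧
      (∀ j, ContDiffOn ℝ 1 (δfun j) (Set.Ioi 0)) ∧
      ContDiffOn ℝ 1 (sigmaFn pp φ) (Set.Ioi 0) ∧
      (∀ t, 0 < t → (∏ j, δfun j t) = t) ∧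
      (∀ j t, 0 < t → sigmaFn pp φ t = t ^ (-(pp j)⁻¹) * φ j (δfun j t)) ∧
      (∀ t, 0 < t → DifferentiableAt ℝ (sigmaFn pp φ) t ∧
        (r / n - p⁻¹ - δ) / t ≤ deriv (sigmaFn pp φ) t / sigmaFn pp φ t ∧
        deriv (sigmaFn pp φ) t / sigmaFn pp φ t ≤ (r / n - p⁻¹ + δ) / t) ∧
      (∀ j t, 0 < t → DifferentiableAt ℝ (δfun j) t ∧
        (β j * rr j - δ) / ((rr j + δ) * t) ≤ deriv (δfun j) t / δfun j t ∧
        deriv (δfun j) t / δfun j t ≤ (β j * rr j + δ) / ((rr j - δ) * t)) := by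
  classical
  have hnne : Nonempty (Fin n) := ⟨⟨0, hn⟩⟩
  have hnR : (0:ℝ) < (n:ℝ) := by exact_mod_cast hn
  -- basic positivity and algebra
  have hppos : ∀ j, 0 < pp j := fun j => lt_of_lt_of_le one_pos (hpp j)
  have hrrsum : 0 < ∑ j, (rr j)⁻¹ :=
    Finset.sum_pos (fun j _ => inv_pos.mpr (hrr j)) Finset.univ_nonempty
  have hr : 0 < r := by rw [hrdef]; positivity
  have hrmul : r * ∑ j, (rr j)⁻¹ = n := by
    rw [hrdef, div_mul_cancel₀ _ hrrsum.ne']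
  have hrsum : ∑ j, (rr j)⁻¹ = n / r := by
    rw [eq_div_iff hr.ne']; linarith [hrmul]
  have hqsum : 0 < ∑ j, (pp j * rr j)⁻¹ :=
    Finset.sum_pos (fun j _ => inv_pos.mpr (mul_pos (hppos j) (hrr j))) Finset.univ_nonempty
  have hp : 0 < p := by rw [hpdef]; positivity
  have hpinv : p⁻¹ = (r / n) * ∑ j, (pp j * rr j)⁻¹ := by
    rw [hpdef, inv_div, div_div_eq_mul_div]; ring
  have hβr : ∀ j, β j * rr j = r / n + (pp j)⁻¹ - p⁻¹ := by
    intro j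
    rw [hβdef j, mul_comm ((rr j)⁻¹) _, mul_assoc, inv_mul_cancel₀ (hrr j).ne', mul_one]
  have hβsum : ∑ j, β j = 1 := by
    have hexp : ∀ j, β j = (r / n) * (rr j)⁻¹ + (pp j * rr j)⁻¹ - p⁻¹ * (rr j)⁻¹ := by
      intro j; rw [hβdef j, mul_inv]; ring
    rw [Finset.sum_congr rfl (fun j _ => hexp j), Finset.sum_sub_distrib,
      Finset.sum_add_distrib, ← Finset.mul_sum, ← Finset.mul_sum, hrsum, hpinv]
    field_simp
    ring
  have hβ1 : ∀ j, β j ≤ 1 := by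
    intro j
    calc β j ≤ ∑ i, β i := Finset.single_le_sum (fun i _ => (hβ i).le) (Finset.mem_univ j)
    _ = 1 := hβsum
  have hδβ : ∀ j, 2 * δ ≤ β j * rr j := by
    intro j
    have h1 : (⨅ i, β i * rr i) ≤ β j * rr j := by
      apply ciInf_le
      exact Set.Finite.bddBelow (Set.finite_range _)
    linarith
  have hδr : ∀ j, δ < rr j := by
    intro j
    have h1 := hδβ j
    have h2 : β j * rr j ≤ rr j := by nlinarith [hβ1 j, (hrr j).le]
    linarith
  have hcj : ∀ j, 0 < rr j - δ := fun j => by linarith [hδr j]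
  have hCj : ∀ j, 0 < rr j + δ := fun j => by linarith [(hrr j)]
  set c : ℝ := r / n - p⁻¹ with hcdef
  have hcβ : ∀ j, (pp j)⁻¹ + c = β j * rr j := by
    intro j; rw [hβr j, hcdef]; ring
  clear_value c
  -- L and M
  set L : Fin n → ℝ → ℝ := fun j y => Real.log (φ j (Real.exp y)) with hLdef
  have hLs : ∀ j, SlopeBnd (L j) (rr j - δ) (rr j + δ) := by
    intro j
    have := slopeBnd_logphi (fun t ht => hφpos j t ht) (hφup j) (hφdown j)
    simpa [hLdef, sub_eq_add_neg, neg_add_eq_sub] using this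
  have hLcd : ∀ j, ContDiff ℝ 1 (L j) := fun j =>
    contDiff_logphi (fun t ht => hφpos j t ht) (hφC1 j)
  have hLcont : ∀ j, Continuous (L j) := fun j => (hLs j).continuous (hcj j) (hCj j)
  set M : Fin n → ℝ → ℝ := fun j => Function.invFun (L j) with hMdef
  have hMs : ∀ j, SlopeBnd (M j) (rr j + δ)⁻¹ (rr j - δ)⁻¹ := fun j =>
    (hLs j).inv_slope (hcj j) (hCj j) (hLcont j)
  have hMcont : ∀ j, Continuous (M j) := fun j =>
    (hMs j).continuous (inv_pos.mpr (hCj j)) (inv_pos.mpr (hcj j))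
  have hLM : ∀ j y, L j (M j y) = y := fun j => (hLs j).right_inv (hcj j) (hLcont j)
  have hML : ∀ j x, M j (L j x) = x := fun j => (hLs j).left_inv (hcj j)
  set m : Fin n → ℝ → ℝ := fun j y => (deriv (L j) (M j y))⁻¹ with hmdef
  have hMd : ∀ j y, HasDerivAt (M j) (m j y) y := fun j y =>
    (hLs j).hasDerivAt_inv (hcj j) (hCj j) (hLcd j) y
  have hmlb : ∀ j y, (rr j + δ)⁻¹ ≤ m j y := by
    intro j y
    have hb := (hLs j).deriv_bounds (hLcd j) (M j y)
    exact inv_anti₀ (lt_of_lt_of_le (hcj j) hb.1) hb.2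
  have hmub : ∀ j y, m j y ≤ (rr j - δ)⁻¹ := by
    intro j y
    have hb := (hLs j).deriv_bounds (hLcd j) (M j y)
    exact inv_anti₀ (hcj j) hb.1
  have hmpos : ∀ j y, 0 < m j y := fun j y =>
    lt_of_lt_of_le (inv_pos.mpr (hCj j)) (hmlb j y)
  have hmcont : ∀ j, Continuous (m j) := by
    intro j
    apply Continuous.inv₀
    · exact ((hLcd j).continuous_deriv le_rfl).comp (hMcont j)
    · intro y
      exact ne_of_gt (lt_of_lt_of_le (hcj j) (((hLs j).deriv_bounds (hLcd j) (M j y)).1))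
  -- F and S
  set F : ℝ → ℝ → ℝ := fun x s => ∑ j, M j (x / pp j + s) with hFdef
  set K₁ : ℝ := ∑ j, (rr j + δ)⁻¹ with hK1def
  set K₂ : ℝ := ∑ j, (rr j - δ)⁻¹ with hK2def
  have hK1 : 0 < K₁ := Finset.sum_pos (fun j _ => inv_pos.mpr (hCj j)) Finset.univ_nonempty
  have hK2 : 0 < K₂ := Finset.sum_pos (fun j _ => inv_pos.mpr (hcj j)) Finset.univ_nonempty
  have hFs : ∀ x, SlopeBnd (fun s => F x s) K₁ K₂ := by
    intro x a b hab
    have hkey : ∀ j : Fin n,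
        (rr j + δ)⁻¹ * (b - a) ≤ M j (x / pp j + b) - M j (x / pp j + a) ∧
        M j (x / pp j + b) - M j (x / pp j + a) ≤ (rr j - δ)⁻¹ * (b - a) := by
      intro j
      have h1 := hMs j (show x / pp j + a ≤ x / pp j + b by linarith)
      have h2 : x / pp j + b - (x / pp j + a) = b - a := by ring
      rw [h2] at h1
      exact h1
    have hsub : F x b - F x a = ∑ j, (M j (x / pp j + b) - M j (x / pp j + a)) := by
      rw [Finset.sum_sub_distrib]
    constructor
    · calc K₁ * (b - a) = ∑ j, (rr j + δ)⁻¹ * (b - a) := by rw [hK1def, Finset.sum_mul]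
      _ ≤ ∑ j, (M j (x / pp j + b) - M j (x / pp j + a)) :=
        Finset.sum_le_sum fun j _ => (hkey j).1
      _ = F x b - F x a := hsub.symm
    · calc F x b - F x a = ∑ j, (M j (x / pp j + b) - M j (x / pp j + a)) := hsub
      _ ≤ ∑ j, (rr j - δ)⁻¹ * (b - a) := Finset.sum_le_sum fun j _ => (hkey j).2
      _ = K₂ * (b - a) := by rw [hK2def, Finset.sum_mul]
  have hFcont : ∀ x, Continuous (fun s => F x s) := fun x =>
    ((hFs x).continuous hK1 hK2)
  set S : ℝ → ℝ := fun x => Function.invFun (fun s => F x s) x with hSdef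
  have hFS : ∀ x, F x (S x) = x := fun x => (hFs x).right_inv hK1 (hFcont x) x
  set KS : ℝ := (1 + ∑ j, (pp j)⁻¹ * (rr j - δ)⁻¹) / K₁ with hKSdef
  have hKS : 0 < KS := by
    have : 0 ≤ ∑ j, (pp j)⁻¹ * (rr j - δ)⁻¹ :=
      Finset.sum_nonneg fun j _ =>
        le_of_lt (mul_pos (inv_pos.mpr (hppos j)) (inv_pos.mpr (hcj j)))
    exact div_pos (by linarith) hK1
  have hSlip : ∀ x y : ℝ, |S y - S x| ≤ KS * |y - x| := by
    intro x y
    have h1 : K₁ * |S y - S x| ≤ |F y (S y) - F y (S x)| :=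
      ((hFs y).abs_bound hK1 (S x) (S y)).1
    have h3 : |F y (S x) - F x (S x)| ≤ (∑ j, (pp j)⁻¹ * (rr j - δ)⁻¹) * |y - x| := by
      have he : F y (S x) - F x (S x) = ∑ j, (M j (y / pp j + S x) - M j (x / pp j + S x)) := by
        rw [Finset.sum_sub_distrib]
      rw [he]
      calc |∑ j, (M j (y / pp j + S x) - M j (x / pp j + S x))|
          ≤ ∑ j, |M j (y / pp j + S x) - M j (x / pp j + S x)| :=
            Finset.abs_sum_le_sum_abs _ _
      _ ≤ ∑ j, (pp j)⁻¹ * (rr j - δ)⁻¹ * |y - x| := by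
          apply Finset.sum_le_sum
          intro j _
          have h4 := ((hMs j).abs_bound (inv_pos.mpr (hCj j)) (x / pp j + S x)
            (y / pp j + S x)).2
          have h5 : y / pp j + S x - (x / pp j + S x) = (y - x) / pp j := by ring
          rw [h5] at h4
          have h6 : |(y - x) / pp j| = |y - x| / pp j := by
            rw [abs_div, abs_of_pos (hppos j)]
          rw [h6] at h4
          calc |M j (y / pp j + S x) - M j (x / pp j + S x)|
              ≤ (rr j - δ)⁻¹ * (|y - x| / pp j) := h4
          _ = (pp j)⁻¹ * (rr j - δ)⁻¹ * |y - x| := by ring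
      _ = (∑ j, (pp j)⁻¹ * (rr j - δ)⁻¹) * |y - x| := by rw [Finset.sum_mul]
    have h2 : F y (S y) = y := hFS y
    have h2' : F x (S x) = x := hFS x
    have h7 : |F y (S y) - F y (S x)| ≤ |y - x| + |F y (S x) - F x (S x)| := by
      rw [h2]
      calc |y - F y (S x)| = |(y - x) + (x - F y (S x))| := by ring_nf
      _ ≤ |y - x| + |x - F y (S x)| := abs_add_le _ _
      _ = |y - x| + |F y (S x) - F x (S x)| := by
          rw [h2', abs_sub_comm x (F y (S x))]
    rw [hKSdef, div_mul_eq_mul_div, le_div_iff₀ hK1]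
    have h8 : 0 ≤ |y - x| := abs_nonneg _
    nlinarith [h1, h3, h7]
  have hScont : Continuous S := by
    rw [Metric.continuous_iff]
    intro x ε hε
    refine ⟨ε / KS, div_pos hε hKS, fun y hy => ?_⟩
    rw [Real.dist_eq] at *
    calc |S y - S x| ≤ KS * |y - x| := hSlip x y
    _ < KS * (ε / KS) := mul_lt_mul_of_pos_left hy hKS
    _ = ε := by field_simp
  set dS : ℝ → ℝ := fun x =>
    (1 - ∑ j, m j (x / pp j + S x) * (pp j)⁻¹) / (∑ j, m j (x / pp j + S x)) with hdSdef
  have hApos : ∀ x, 0 < ∑ j, m j (x / pp j + S x) := fun x =>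
    Finset.sum_pos (fun j _ => hmpos j _) Finset.univ_nonempty
  have hSd : ∀ a, HasDerivAt S (dS a) a := by
    intro a
    have hA : 0 < ∑ j, m j (a / pp j + S a) := hApos a
    have hlip : ∀ j : Fin n, (fun x => M j (x / pp j + S x) - M j (a / pp j + S a)
        - m j (a / pp j + S a) * ((x - a) / pp j + (S x - S a)))
        =o[nhds a] fun x => x - a := by
      intro j
      have h1 : HasDerivAt (M j) (m j (a / pp j + S a)) (a / pp j + S a) := hMd j _
      rw [hasDerivAt_iff_isLittleO] at h1
      have htend : Filter.Tendsto (fun x : ℝ => x / pp j + S x) (nhds a)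
          (nhds (a / pp j + S a)) := by
        have hco : Continuous fun x : ℝ => x / pp j + S x :=
          (continuous_id.div_const _).add hScont
        exact hco.tendsto a
      have h2 := h1.comp_tendsto htend
      have h3 : (fun x : ℝ => (x / pp j + S x) - (a / pp j + S a)) =O[nhds a]
          fun x => x - a := by
        rw [Asymptotics.isBigO_iff]
        refine ⟨(pp j)⁻¹ + KS, Filter.Eventually.of_forall fun x => ?_⟩
        simp only [Real.norm_eq_abs]
        have hb := hSlip a x
        have he : x / pp j + S x - (a / pp j + S a) = (x - a) / pp j + (S x - S a) := by
          ring
        rw [he]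
        calc |(x - a) / pp j + (S x - S a)| ≤ |(x - a) / pp j| + |S x - S a| := abs_add_le _ _
        _ ≤ (pp j)⁻¹ * |x - a| + KS * |x - a| := by
            apply add_le_add _ hb
            rw [abs_div, abs_of_pos (hppos j), div_eq_inv_mul]
        _ = ((pp j)⁻¹ + KS) * |x - a| := by ring
      have h4 := h2.trans_isBigO h3
      refine h4.congr' (Filter.Eventually.of_forall fun x => ?_)
        (Filter.Eventually.of_forall fun x => rfl)
      show M j (x / pp j + S x) - M j (a / pp j + S a)
          - ((x / pp j + S x) - (a / pp j + S a)) • m j (a / pp j + S a) = _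
      rw [smul_eq_mul]
      ring
    have hsum := Asymptotics.IsLittleO.sum (fun j (_ : j ∈ Finset.univ) => hlip j)
    have heq : ∀ x : ℝ, (∑ j, (M j (x / pp j + S x) - M j (a / pp j + S a)
        - m j (a / pp j + S a) * ((x - a) / pp j + (S x - S a))))
        = (x - a) - ((∑ j, m j (a / pp j + S a) * (pp j)⁻¹) * (x - a)
          + (∑ j, m j (a / pp j + S a)) * (S x - S a)) := by
      intro x
      have e1 : ∑ j, M j (x / pp j + S x) = x := hFS x
      have e2 : ∑ j, M j (a / pp j + S a) = a := hFS a
      have e3 : ∑ j, m j (a / pp j + S a) * ((x - a) / pp j + (S x - S a))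
          = (∑ j, m j (a / pp j + S a) * (pp j)⁻¹) * (x - a)
            + (∑ j, m j (a / pp j + S a)) * (S x - S a) := by
        rw [Finset.sum_mul, Finset.sum_mul, ← Finset.sum_add_distrib]
        apply Finset.sum_congr rfl
        intro j _
        ring
      rw [Finset.sum_sub_distrib, Finset.sum_sub_distrib, e1, e2, e3]
    have h5 : (fun x : ℝ => (x - a) - ((∑ j, m j (a / pp j + S a) * (pp j)⁻¹) * (x - a)
        + (∑ j, m j (a / pp j + S a)) * (S x - S a))) =o[nhds a] fun x => x - a :=
      hsum.congr' (Filter.Eventually.of_forall fun x => by rw [Finset.sum_apply]; exact heq x)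
        (Filter.Eventually.of_forall fun x => rfl)
    have h6 := h5.const_mul_left (-(∑ j, m j (a / pp j + S a))⁻¹)
    rw [hasDerivAt_iff_isLittleO]
    refine h6.congr' (Filter.Eventually.of_forall fun x => ?_)
      (Filter.Eventually.of_forall fun x => rfl)
    show -(∑ j, m j (a / pp j + S a))⁻¹ * ((x - a) - ((∑ j, m j (a / pp j + S a) * (pp j)⁻¹) * (x - a)
        + (∑ j, m j (a / pp j + S a)) * (S x - S a))) = S x - S a - (x - a) • dS a
    rw [smul_eq_mul, hdSdef]
    field_simp
    ring
  have hdScont : Continuous dS := by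
    have hinner : ∀ j : Fin n, Continuous fun x : ℝ => m j (x / pp j + S x) := fun j =>
      (hmcont j).comp ((continuous_id.div_const _).add hScont)
    have hden : Continuous fun x : ℝ => ∑ j, m j (x / pp j + S x) :=
      continuous_finset_sum _ fun j _ => hinner j
    have hnum : Continuous fun x : ℝ => 1 - ∑ j, m j (x / pp j + S x) * (pp j)⁻¹ :=
      continuous_const.sub (continuous_finset_sum _ fun j _ => (hinner j).mul continuous_const)
    rw [hdSdef]
    exact hnum.div hden fun x => (hApos x).ne'
  have hSbound : ∀ x, c - δ ≤ dS x ∧ dS x ≤ c + δ := by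
    intro x
    have hAx : 0 < ∑ j, m j (x / pp j + S x) := hApos x
    have dSeq : dS x = (1 - ∑ j, m j (x / pp j + S x) * (pp j)⁻¹)
        / (∑ j, m j (x / pp j + S x)) := by rw [hdSdef]
    have hβδpos : ∀ j : Fin n, 0 < β j * rr j - δ := by
      intro j; have := hδβ j; linarith
    have hub : 1 ≤ ∑ j, m j (x / pp j + S x) * (β j * rr j + δ) := by
      have h1 : ∀ j : Fin n, β j ≤ m j (x / pp j + S x) * (β j * rr j + δ) := by
        intro j
        have h2 : β j ≤ (rr j + δ)⁻¹ * (β j * rr j + δ) := by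
          rw [← div_eq_inv_mul, le_div_iff₀ (hCj j)]
          nlinarith [hβ1 j, hδ, hβ j]
        calc β j ≤ (rr j + δ)⁻¹ * (β j * rr j + δ) := h2
        _ ≤ m j (x / pp j + S x) * (β j * rr j + δ) := by
            apply mul_le_mul_of_nonneg_right (hmlb j _)
            nlinarith [hβ j, hrr j, hδ]
      calc (1:ℝ) = ∑ j, β j := hβsum.symm
      _ ≤ _ := Finset.sum_le_sum fun j _ => h1 j
    have hlb : ∑ j, m j (x / pp j + S x) * (β j * rr j - δ) ≤ 1 := by
      have h1 : ∀ j : Fin n, m j (x / pp j + S x) * (β j * rr j - δ) ≤ β j := by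
        intro j
        have h2 : (rr j - δ)⁻¹ * (β j * rr j - δ) ≤ β j := by
          rw [← div_eq_inv_mul, div_le_iff₀ (hcj j)]
          nlinarith [hβ1 j, hδ, hβ j]
        calc m j (x / pp j + S x) * (β j * rr j - δ)
            ≤ (rr j - δ)⁻¹ * (β j * rr j - δ) :=
              mul_le_mul_of_nonneg_right (hmub j _) (hβδpos j).le
        _ ≤ β j := h2
      calc ∑ j, m j (x / pp j + S x) * (β j * rr j - δ) ≤ ∑ j, β j :=
        Finset.sum_le_sum fun j _ => h1 j
      _ = 1 := hβsum
    have hexpand : ∀ e : ℝ, ∑ j, m j (x / pp j + S x) * (β j * rr j + e)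
        = (∑ j, m j (x / pp j + S x) * (pp j)⁻¹) + (c + e) * (∑ j, m j (x / pp j + S x)) := by
      intro e
      rw [Finset.mul_sum, ← Finset.sum_add_distrib]
      apply Finset.sum_congr rfl
      intro j _
      rw [← hcβ j]
      ring
    constructor
    · rw [dSeq, le_div_iff₀ hAx]
      have := hexpand (-δ)
      simp only [← sub_eq_add_neg] at this
      nlinarith [hlb, this]
    · rw [dSeq, div_le_iff₀ hAx]
      have := hexpand δ
      nlinarith [hub, this]
  have hScd : ContDiff ℝ 1 S := by
    rw [contDiff_one_iff_deriv]
    have hder : deriv S = dS := funext fun x => (hSd x).deriv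
    exact ⟨fun x => (hSd x).differentiableAt, hder ▸ hdScont⟩
  clear_value dS
  have hqb : ∀ j x, β j * rr j - δ ≤ (pp j)⁻¹ + dS x ∧ (pp j)⁻¹ + dS x ≤ β j * rr j + δ := by
    intro j x
    obtain ⟨h3, h4⟩ := hSbound x
    have h2 := hcβ j
    constructor <;> linarith
  -- transfer to t-space
  set Df : Fin n → ℝ → ℝ := fun j t => Real.exp (M j (Real.log t / pp j + S (Real.log t)))
    with hDfdef
  set σf : ℝ → ℝ := fun t => Real.exp (S (Real.log t)) with hσdef
  have hσpos : ∀ t, 0 < σf t := fun t => Real.exp_pos _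
  have hDfpos : ∀ j t, 0 < Df j t := fun j t => Real.exp_pos _
  have hφeq : ∀ j u, 0 < u → φ j u = Real.exp (L j (Real.log u)) := by
    intro j u hu
    simp only [hLdef, Real.exp_log hu, Real.exp_log (hφpos j u hu)]
  have hrpow : ∀ (j : Fin n) (t : ℝ), 0 < t →
      t ^ (-(pp j)⁻¹) = Real.exp (-(Real.log t / pp j)) := by
    intro j t ht
    rw [Real.rpow_def_of_pos ht]
    congr 1
    ring
  have hval : ∀ j t, 0 < t → t ^ (-(pp j)⁻¹) * φ j (Df j t) = σf t := by
    intro j t ht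
    have h1 : φ j (Df j t) = Real.exp (Real.log t / pp j + S (Real.log t)) := by
      rw [hφeq j _ (hDfpos j t)]
      show Real.exp (L j (Real.log (Real.exp (M j (Real.log t / pp j + S (Real.log t)))))) = _
      rw [Real.log_exp, hLM]
    rw [h1, hrpow j t ht]
    show Real.exp _ * Real.exp _ = Real.exp _
    rw [← Real.exp_add]
    congr 1
    ring
  have hprod : ∀ t, 0 < t → ∏ j, Df j t = t := by
    intro t ht
    show ∏ j, Real.exp (M j (Real.log t / pp j + S (Real.log t))) = t
    rw [← Real.exp_sum]
    have := hFS (Real.log t)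
    rw [show (∑ j, M j (Real.log t / pp j + S (Real.log t)))
      = F (Real.log t) (S (Real.log t)) from rfl, this, Real.exp_log ht]
  have hsup : ∀ t, 0 < t → (⨆ j, t ^ (-(pp j)⁻¹) * φ j (Df j t)) = σf t := by
    intro t ht
    have he : (fun j : Fin n => t ^ (-(pp j)⁻¹) * φ j (Df j t)) = fun _ => σf t :=
      funext fun j => hval j t ht
    rw [he, ciSup_const]
  have hlbd : ∀ t, 0 < t → ∀ (d : Fin n → ℝ), (∀ j, 0 < d j) → (∏ j, d j) = t →
      σf t ≤ ⨆ j, t ^ (-(pp j)⁻¹) * φ j (d j) := by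
    intro t ht d hd hdp
    by_contra hcon
    push_neg at hcon
    have hbdd : BddAbove (Set.range fun j : Fin n => t ^ (-(pp j)⁻¹) * φ j (d j)) :=
      Set.Finite.bddAbove (Set.finite_range _)
    have hj : ∀ j : Fin n, t ^ (-(pp j)⁻¹) * φ j (d j) < σf t :=
      fun j => lt_of_le_of_lt (le_ciSup hbdd j) hcon
    have hlt : ∀ j : Fin n, Real.log (d j) < M j (Real.log t / pp j + S (Real.log t)) := by
      intro j
      have h1 := hj j
      rw [hrpow j t ht, hφeq j _ (hd j), ← Real.exp_add] at h1
      have h2 : -(Real.log t / pp j) + L j (Real.log (d j)) < S (Real.log t) :=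
        Real.exp_lt_exp.mp h1
      have h3 : L j (Real.log (d j)) < Real.log t / pp j + S (Real.log t) := by linarith
      have h4 := ((hMs j).strictMono (inv_pos.mpr (hCj j))) h3
      rwa [hML j] at h4
    have hsumlt : ∑ j, Real.log (d j) < ∑ j, M j (Real.log t / pp j + S (Real.log t)) :=
      Finset.sum_lt_sum_of_nonempty Finset.univ_nonempty fun j _ => hlt j
    have he1 : ∑ j, Real.log (d j) = Real.log t := by
      rw [← Real.log_prod fun j _ => (hd j).ne', hdp]
    have he2 : ∑ j, M j (Real.log t / pp j + S (Real.log t)) = Real.log t := hFS (Real.log t)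
    rw [he1, he2] at hsumlt
    exact lt_irrefl _ hsumlt
  have hsig : ∀ t, 0 < t → sigmaFn pp φ t = σf t := by
    intro t ht
    have hmem : σf t ∈ {a : ℝ | ∃ d : Fin n → ℝ, (∀ j, 0 < d j) ∧ (∏ j, d j) = t ∧
        a = ⨆ j, t ^ (-(pp j)⁻¹) * φ j (d j)} :=
      ⟨fun j => Df j t, fun j => hDfpos j t, hprod t ht, (hsup t ht).symm⟩
    have hlb : ∀ a ∈ {a : ℝ | ∃ d : Fin n → ℝ, (∀ j, 0 < d j) ∧ (∏ j, d j) = t ∧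
        a = ⨆ j, t ^ (-(pp j)⁻¹) * φ j (d j)}, σf t ≤ a := by
      rintro a ⟨d, hd, hdp, rfl⟩
      exact hlbd t ht d hd hdp
    exact le_antisymm (csInf_le ⟨σf t, hlb⟩ hmem) (le_csInf ⟨σf t, hmem⟩ hlb)
  -- remaining conclusions
  have hβδpos : ∀ j : Fin n, 0 < β j * rr j - δ := by
    intro j; have := hδβ j; linarith
  have hMcd : ∀ j, ContDiff ℝ 1 (M j) := by
    intro j
    rw [contDiff_one_iff_deriv]
    have hder : deriv (M j) = m j := funext fun y => (hMd j y).deriv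
    exact ⟨fun y => (hMd j y).differentiableAt, hder ▸ hmcont j⟩
  have hlogOn : ContDiffOn ℝ 1 Real.log (Set.Ioi (0:ℝ)) :=
    Real.contDiffOn_log.mono fun x hx =>
      Set.mem_compl_singleton_iff.mpr (ne_of_gt (Set.mem_Ioi.mp hx))
  have hDfcd : ∀ j, ContDiffOn ℝ 1 (Df j) (Set.Ioi 0) := by
    intro j
    have hinner : ContDiff ℝ 1 fun x : ℝ => Real.exp (M j (x / pp j + S x)) :=
      Real.contDiff_exp.comp ((hMcd j).comp ((contDiff_id.div_const _).add hScd))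
    exact hinner.comp_contDiffOn hlogOn
  have hσcd : ContDiffOn ℝ 1 (sigmaFn pp φ) (Set.Ioi 0) := by
    have hσcd0 : ContDiffOn ℝ 1 σf (Set.Ioi 0) :=
      (Real.contDiff_exp.comp hScd).comp_contDiffOn hlogOn
    exact hσcd0.congr fun t ht => hsig t (Set.mem_Ioi.mp ht)
  refine ⟨?_, ?_, Df, fun j t _ => hDfpos j t, hDfcd, hσcd, hprod,
    fun j t ht => by rw [hsig t ht, ← hval j t ht], ?_, ?_⟩
  · intro t ht
    exact ⟨fun j => Df j t, fun j => hDfpos j t, hprod t ht, by rw [hsig t ht, hsup t ht]⟩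
  · intro t ht j
    refine ⟨Df j t, ⟨hDfpos j t, by rw [hsig t ht, ← hval j t ht]⟩, ?_⟩
    rintro d' ⟨hd', heq'⟩
    have e1 : (0:ℝ) < t ^ (-(pp j)⁻¹) := Real.rpow_pos_of_pos ht _
    have h1 : t ^ (-(pp j)⁻¹) * φ j d' = t ^ (-(pp j)⁻¹) * φ j (Df j t) := by
      rw [← heq', hsig t ht, ← hval j t ht]
    have h2 : φ j d' = φ j (Df j t) := mul_left_cancel₀ e1.ne' h1
    exact (hφmono j).injOn (Set.mem_Ioi.mpr hd') (Set.mem_Ioi.mpr (hDfpos j t)) h2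
  · -- σ derivative bounds
    intro t ht
    have h1 : HasDerivAt Real.log t⁻¹ t := Real.hasDerivAt_log ht.ne'
    have h2 : HasDerivAt (fun u : ℝ => S (Real.log u)) (dS (Real.log t) * t⁻¹) t :=
      (hSd (Real.log t)).comp t h1
    have h3 : HasDerivAt σf (Real.exp (S (Real.log t)) * (dS (Real.log t) * t⁻¹)) t := h2.exp
    have hev : sigmaFn pp φ =ᶠ[nhds t] σf := by
      filter_upwards [isOpen_Ioi.mem_nhds (Set.mem_Ioi.mpr ht)] with u hu
      exact hsig u hu
    have h4 : HasDerivAt (sigmaFn pp φ) (Real.exp (S (Real.log t)) * (dS (Real.log t) * t⁻¹)) t :=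
      h3.congr_of_eventuallyEq hev
    have hsf : sigmaFn pp φ t = Real.exp (S (Real.log t)) := hsig t ht
    have hratio : deriv (sigmaFn pp φ) t / sigmaFn pp φ t = dS (Real.log t) / t := by
      rw [h4.deriv, hsf, mul_comm, mul_div_assoc, div_self (Real.exp_ne_zero _), mul_one,
        ← div_eq_mul_inv]
    have hb := hSbound (Real.log t)
    refine ⟨h4.differentiableAt, ?_, ?_⟩
    · rw [hratio]; gcongr; exact hb.1
    · rw [hratio]; gcongr; exact hb.2
  · -- δfun derivative bounds
    intro j t ht
    have h1 : HasDerivAt Real.log t⁻¹ t := Real.hasDerivAt_log ht.ne'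
    have h2 : HasDerivAt (fun u : ℝ => Real.log u / pp j) (t⁻¹ / pp j) t := h1.div_const _
    have h3 : HasDerivAt (fun u : ℝ => S (Real.log u)) (dS (Real.log t) * t⁻¹) t :=
      (hSd (Real.log t)).comp t h1
    have h4 : HasDerivAt (fun u : ℝ => Real.log u / pp j + S (Real.log u))
        (t⁻¹ / pp j + dS (Real.log t) * t⁻¹) t := h2.add h3
    have h5 : HasDerivAt (fun u : ℝ => M j (Real.log u / pp j + S (Real.log u)))
        (m j (Real.log t / pp j + S (Real.log t)) * (t⁻¹ / pp j + dS (Real.log t) * t⁻¹)) t :=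
      (hMd j _).comp t h4
    have h7 : HasDerivAt (Df j) (Real.exp (M j (Real.log t / pp j + S (Real.log t))) *
        (m j (Real.log t / pp j + S (Real.log t)) * (t⁻¹ / pp j + dS (Real.log t) * t⁻¹))) t :=
      h5.exp
    have hDft : Df j t = Real.exp (M j (Real.log t / pp j + S (Real.log t))) := rfl
    have hratio : deriv (Df j) t / Df j t
        = m j (Real.log t / pp j + S (Real.log t)) * ((pp j)⁻¹ + dS (Real.log t)) / t := by
      have he : t⁻¹ / pp j + dS (Real.log t) * t⁻¹ = ((pp j)⁻¹ + dS (Real.log t)) / t := by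
        field_simp [ht.ne']
      rw [h7.deriv, hDft, mul_comm, mul_div_assoc, div_self (Real.exp_ne_zero _), mul_one,
        he, ← mul_div_assoc]
    have hq := hqb j (Real.log t)
    have hm1 := hmlb j (Real.log t / pp j + S (Real.log t))
    have hm2 := hmub j (Real.log t / pp j + S (Real.log t))
    have hm0 : 0 < m j (Real.log t / pp j + S (Real.log t)) := hmpos j _
    have hq0 : 0 < (pp j)⁻¹ + dS (Real.log t) := lt_of_lt_of_le (hβδpos j) hq.1
    refine ⟨h7.differentiableAt, ?_, ?_⟩
    · rw [hratio, ← div_div]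
      gcongr
      calc (β j * rr j - δ) / (rr j + δ) = (rr j + δ)⁻¹ * (β j * rr j - δ) := by
            rw [div_eq_inv_mul]
      _ ≤ m j (Real.log t / pp j + S (Real.log t)) * ((pp j)⁻¹ + dS (Real.log t)) :=
            mul_le_mul hm1 hq.1 (hβδpos j).le hm0.le
    · rw [hratio, ← div_div]
      gcongr
      calc m j (Real.log t / pp j + S (Real.log t)) * ((pp j)⁻¹ + dS (Real.log t))
          ≤ (rr j - δ)⁻¹ * (β j * rr j + δ) :=
            mul_le_mul hm2 hq.2 hq0.le (inv_pos.mpr (hcj j)).le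
      _ = (β j * rr j + δ) / (rr j - δ) := by rw [div_eq_inv_mul]

end
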